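/- Let c < b be reals, let p : ℝ → ℝ be continuous on [c,b) with p > 0 on [c,b), and let q : ℝ → ℝ be continuous on [c,b) with q(t) > γ for all t ∈ [c,b) for some γ ∈ ℝ. Suppose the function t ↦ (b−t)/√(p(t)) is not integrable on (c,b). Let u : ℝ → ℝ be differentiable on [c,b) with t ↦ p(t)·(deriv u)(t) differentiable on [c,b), satisfying deriv(t ↦ p(t)·(deriv u)(t))(x) = (q(x) − γ)·u(x) for all x ∈ [c,b), with u(c) = 1 and (deriv u)(c) = 0. Then u² is not integrable on (c,b); hence the endpoint b is in the limit point case. -/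

import Mathlib

open MeasureTheory
open Set

lemma aux_pos (c b : ℝ) (p q : ℝ → ℝ) (γ : ℝ)
    (hppos : ∀ t ∈ Set.Ico c b, 0 < p t)
    (hqγ : ∀ t ∈ Set.Ico c b, γ < q t)
    (u : ℝ → ℝ)
    (hu : ∀ t ∈ Set.Ico c b, DifferentiableAt ℝ u t)
    (hpu : ∀ t ∈ Set.Ico c b, DifferentiableAt ℝ (fun s => p s * deriv u s) t)
    (heq : ∀ t ∈ Set.Ico c b, deriv (fun s => p s * deriv u s) t = (q t - γ) * u t)
    (hu0 : u c = 1) (hu'0 : deriv u c = 0)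
    (d : ℝ) (hd : d ∈ Set.Ico c b) :
    (∀ s ∈ Set.Icc c d, 1 ≤ u s) ∧ (∀ s ∈ Set.Icc c d, 0 ≤ p s * deriv u s) := by
  obtain ⟨hcd, hdb⟩ := hd
  set v : ℝ → ℝ := fun s => p s * deriv u s with hvdef
  have hvc : v c = 0 := by simp [hvdef, hu'0]
  have hu_cont : ContinuousOn u (Ico c b) := fun t ht => (hu t ht).continuousAt.continuousWithinAt
  have hv_cont : ContinuousOn v (Ico c b) := fun t ht => (hpu t ht).continuousAt.continuousWithinAt
  set A : Set ℝ := {t ∈ Icc c d | ∀ s ∈ Icc c t, 0 < u s} with hAdef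
  have hcA : c ∈ A := ⟨⟨le_refl c, hcd⟩, fun s hs => by
    have hsc : s = c := le_antisymm hs.2 hs.1
    simp [hsc, hu0]⟩
  have hbddA : BddAbove A := ⟨d, fun x hx => hx.1.2⟩
  set T := sSup A with hTdef
  have hcT : c ≤ T := le_csSup hbddA hcA
  have hTd : T ≤ d := csSup_le ⟨c, hcA⟩ fun x hx => hx.1.2
  have hTb : T < b := lt_of_le_of_lt hTd hdb
  have hposIco : ∀ s ∈ Ico c T, 0 < u s := by
    intro s hs
    obtain ⟨t, htA, hst⟩ := exists_lt_of_lt_csSup ⟨c, hcA⟩ hs.2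
    exact htA.2 s ⟨hs.1, hst.le⟩
  have hsubT : Icc c T ⊆ Ico c b := fun x hx => ⟨hx.1, lt_of_le_of_lt hx.2 hTb⟩
  have hvmono : MonotoneOn v (Icc c T) := by
    apply monotoneOn_of_deriv_nonneg (convex_Icc c T) (hv_cont.mono hsubT)
    · intro x hx
      rw [interior_Icc] at hx
      exact (hpu x (hsubT ⟨hx.1.le, hx.2.le⟩)).differentiableWithinAt
    · intro x hx
      rw [interior_Icc] at hx
      rw [heq x (hsubT ⟨hx.1.le, hx.2.le⟩)]
      exact mul_nonneg (sub_nonneg.2 (hqγ x (hsubT ⟨hx.1.le, hx.2.le⟩)).le)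
        (hposIco x ⟨hx.1.le, hx.2⟩).le
  have hvT : ∀ s ∈ Icc c T, 0 ≤ v s := fun s hs => by
    have h := hvmono (left_mem_Icc.2 hcT) hs hs.1
    rwa [hvc] at h
  have hu'T : ∀ s ∈ Icc c T, 0 ≤ deriv u s := fun s hs =>
    (mul_nonneg_iff_of_pos_left (hppos s (hsubT hs))).1 (hvT s hs)
  have humono : MonotoneOn u (Icc c T) := by
    apply monotoneOn_of_deriv_nonneg (convex_Icc c T) (hu_cont.mono hsubT)
    · intro x hx
      rw [interior_Icc] at hx
      exact (hu x (hsubT ⟨hx.1.le, hx.2.le⟩)).differentiableWithinAt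
    · intro x hx
      rw [interior_Icc] at hx
      exact hu'T x ⟨hx.1.le, hx.2.le⟩
  have huT : ∀ s ∈ Icc c T, 1 ≤ u s := fun s hs => by
    have h := humono (left_mem_Icc.2 hcT) hs hs.1
    rwa [hu0] at h
  have hTA : T ∈ A := ⟨⟨hcT, hTd⟩, fun s hs => lt_of_lt_of_le one_pos (huT s hs)⟩
  have hTeq : T = d := by
    by_contra hne
    have hTd' : T < d := lt_of_le_of_ne hTd hne
    have hcontT : ContinuousAt u T := (hu T ⟨hcT, hTb⟩).continuousAt
    have h0 : (0:ℝ) < u T := lt_of_lt_of_le one_pos (huT T ⟨hcT, le_refl T⟩)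
    have hev : ∀ᶠ s in nhds T, 0 < u s := hcontT.eventually (eventually_gt_nhds h0)
    obtain ⟨ε, hε, hball⟩ := Metric.eventually_nhds_iff.mp hev
    set t' := min d (T + ε/2) with ht'def
    have hTt' : T < t' := lt_min hTd' (by linarith)
    have ht'A : t' ∈ A := by
      refine ⟨⟨hcT.trans hTt'.le, min_le_left _ _⟩, fun s hs => ?_⟩
      rcases le_or_gt s T with h | h
      · exact hTA.2 s ⟨hs.1, h⟩
      · apply hball
        rw [Real.dist_eq, abs_lt]
        have h1 : s ≤ t' := hs.2
        have h2 : t' ≤ T + ε/2 := min_le_right _ _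
        constructor <;> linarith
    exact absurd (le_csSup hbddA ht'A) (not_le.2 hTt')
  rw [hTeq] at huT hvT
  exact ⟨huT, fun s hs => hvT s hs⟩

/-- If `(b−t)/√(p(t))` is not integrable on `(c,b)`, then the solution `u` of
`(p·u')' = (q − γ)·u` on `[c,b)` with `u(c) = 1`, `u'(c) = 0` is not in `L²(c,b)`;
hence the endpoint `b` is in the limit point case. -/
theorem limit_point_of_not_integrable_weighted
    (c b : ℝ) (hcb : c < b)
    (p q : ℝ → ℝ)
    (hp : ContinuousOn p (Set.Ico c b)) (hq : ContinuousOn q (Set.Ico c b))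
    (hppos : ∀ t ∈ Set.Ico c b, 0 < p t)
    (γ : ℝ) (hqγ : ∀ t ∈ Set.Ico c b, γ < q t)
    (hnotint : ¬ IntegrableOn (fun t => (b - t) / Real.sqrt (p t)) (Set.Ioo c b))
    (u : ℝ → ℝ)
    (hu : ∀ t ∈ Set.Ico c b, DifferentiableAt ℝ u t)
    (hpu : ∀ t ∈ Set.Ico c b, DifferentiableAt ℝ (fun s => p s * deriv u s) t)
    (heq : ∀ t ∈ Set.Ico c b,
      deriv (fun s => p s * deriv u s) t = (q t - γ) * u t)
    (hu0 : u c = 1) (hu'0 : deriv u c = 0) :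
    ¬ IntegrableOn (fun x => u x ^ 2) (Set.Ioo c b) := by
  intro hint
  apply hnotint
  -- basic setup
  set t0 : ℝ := (c + b) / 2 with ht0def
  set t1 : ℝ := (t0 + b) / 2 with ht1def
  have hct0 : c < t0 := by rw [ht0def]; linarith
  have ht0b : t0 < b := by rw [ht0def]; linarith
  have ht0t1 : t0 < t1 := by rw [ht1def]; linarith
  have ht1b : t1 < b := by rw [ht1def]; linarith
  have hct1 : c < t1 := hct0.trans ht0t1
  set v : ℝ → ℝ := fun s => p s * deriv u s with hvdef
  have hvc : v c = 0 := by simp [hvdef, hu'0]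
  have hu_cont : ContinuousOn u (Ico c b) := fun t ht => (hu t ht).continuousAt.continuousWithinAt
  have hv_cont : ContinuousOn v (Ico c b) := fun t ht => (hpu t ht).continuousAt.continuousWithinAt
  have hu1 : ∀ t ∈ Ico c b, 1 ≤ u t := fun t ht =>
    (aux_pos c b p q γ hppos hqγ u hu hpu heq hu0 hu'0 t ht).1 t ⟨ht.1, le_refl t⟩
  have hv0 : ∀ t ∈ Ico c b, 0 ≤ v t := fun t ht =>
    (aux_pos c b p q γ hppos hqγ u hu hpu heq hu0 hu'0 t ht).2 t ⟨ht.1, le_refl t⟩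
  have hupos : ∀ t ∈ Ico c b, 0 < u t := fun t ht => lt_of_lt_of_le one_pos (hu1 t ht)
  -- m := v t0 > 0
  have hm : 0 < v t0 := by
    have hsub0 : Icc c t0 ⊆ Ico c b := fun x hx => ⟨hx.1, lt_of_le_of_lt hx.2 ht0b⟩
    have hsm : StrictMonoOn v (Icc c t0) := by
      apply strictMonoOn_of_deriv_pos (convex_Icc c t0) (hv_cont.mono hsub0)
      intro x hx
      rw [interior_Icc] at hx
      have hx' : x ∈ Ico c b := hsub0 ⟨hx.1.le, hx.2.le⟩
      rw [heq x hx']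
      exact mul_pos (sub_pos.2 (hqγ x hx')) (hupos x hx')
    have := hsm (left_mem_Icc.2 hct0.le) (right_mem_Icc.2 hct0.le) hct0
    rwa [hvc] at this
  -- v is monotone up to any d < b
  have hvmono : ∀ d ∈ Ico c b, MonotoneOn v (Icc c d) := by
    intro d hd
    have hsub : Icc c d ⊆ Ico c b := fun x hx => ⟨hx.1, lt_of_le_of_lt hx.2 hd.2⟩
    apply monotoneOn_of_deriv_nonneg (convex_Icc c d) (hv_cont.mono hsub)
    · intro x hx
      rw [interior_Icc] at hx
      exact (hpu x (hsub ⟨hx.1.le, hx.2.le⟩)).differentiableWithinAt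
    · intro x hx
      rw [interior_Icc] at hx
      have hx' : x ∈ Ico c b := hsub ⟨hx.1.le, hx.2.le⟩
      rw [heq x hx']
      exact mul_nonneg (sub_nonneg.2 (hqγ x hx').le) (hupos x hx').le
  have hvge : ∀ t ∈ Ico t0 b, v t0 ≤ v t := by
    intro t ht
    have htc : t ∈ Ico c b := ⟨hct0.le.trans ht.1, ht.2⟩
    exact hvmono t htc ⟨hct0.le, ht.1⟩ ⟨htc.1, le_refl t⟩ ht.1
  -- continuity of deriv u
  have hdu_cont : ContinuousOn (deriv u) (Ico c b) := by
    have h1 : ContinuousOn (fun s => v s / p s) (Ico c b) :=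
      hv_cont.div hp fun t ht => (hppos t ht).ne'
    apply h1.congr
    intro x hx
    rw [hvdef]
    exact (mul_div_cancel_left₀ _ (hppos x hx).ne').symm
  have hpinv_cont : ContinuousOn (fun s => (p s)⁻¹) (Ico c b) :=
    hp.inv₀ fun t ht => (hppos t ht).ne'
  -- G
  set G : ℝ → ℝ := fun t => ∫ s in t0..t, (p s)⁻¹ with hGdef
  have hIcoOC : OrdConnected (Ico c b) := ordConnected_Ico
  have hG_deriv : ∀ t ∈ Ioo c b, HasDerivAt G (p t)⁻¹ t := by
    intro t ht
    have htmem : t ∈ Ico c b := Ioo_subset_Ico_self ht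
    have ht0mem : t0 ∈ Ico c b := ⟨hct0.le, ht0b⟩
    apply intervalIntegral.integral_hasDerivAt_right
    · exact (hpinv_cont.mono (hIcoOC.uIcc_subset ht0mem htmem)).intervalIntegrable
    · exact (hpinv_cont.mono Ioo_subset_Ico_self).stronglyMeasurableAtFilter isOpen_Ioo t ht
    · exact (hpinv_cont t htmem).continuousAt (Ico_mem_nhds_iff.2 ht)
  have hG0 : G t0 = 0 := intervalIntegral.integral_same
  have hGmono : ∀ s ∈ Ico t0 b, MonotoneOn G (Icc t0 s) := by
    intro s hs
    have hsub : Icc t0 s ⊆ Ioo c b := fun x hx =>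
      ⟨hct0.trans_le hx.1, lt_of_le_of_lt hx.2 hs.2⟩
    apply monotoneOn_of_deriv_nonneg (convex_Icc t0 s)
    · exact fun x hx => (hG_deriv x (hsub hx)).differentiableAt.continuousAt.continuousWithinAt
    · intro x hx
      rw [interior_Icc] at hx
      exact (hG_deriv x (hsub ⟨hx.1.le, hx.2.le⟩)).differentiableAt.differentiableWithinAt
    · intro x hx
      rw [interior_Icc] at hx
      rw [(hG_deriv x (hsub ⟨hx.1.le, hx.2.le⟩)).deriv]
      exact (inv_nonneg).2 (hppos x (Ioo_subset_Ico_self (hsub ⟨hx.1.le, hx.2.le⟩))).le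
  have hGnonneg : ∀ t ∈ Ico t0 b, 0 ≤ G t := by
    intro t ht
    have := hGmono t ht (left_mem_Icc.2 ht.1) (right_mem_Icc.2 ht.1) ht.1
    rwa [hG0] at this
  set a1 : ℝ := G t1 with ha1def
  have ha1 : 0 < a1 := by
    rw [ha1def, hGdef]
    apply intervalIntegral.intervalIntegral_pos_of_pos_on
    · apply ContinuousOn.intervalIntegrable
      apply hpinv_cont.mono
      have h1 : t0 ∈ Ico c b := ⟨hct0.le, ht0b⟩
      have h2 : t1 ∈ Ico c b := ⟨hct1.le, ht1b⟩
      exact hIcoOC.uIcc_subset h1 h2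
    · intro x hx
      exact inv_pos.2 (hppos x ⟨hct0.le.trans hx.1.le, hx.2.trans ht1b⟩)
    · exact ht0t1
  have hGge : ∀ t ∈ Ico t1 b, a1 ≤ G t := by
    intro t ht
    have htb : t ∈ Ico t0 b := ⟨ht0t1.le.trans ht.1, ht.2⟩
    exact hGmono t htb ⟨ht0t1.le, ht.1⟩ (right_mem_Icc.2 htb.1) ht.1
  -- u t ≥ v t0 * G t on [t0, b)
  have hu_ge : ∀ t ∈ Ico t0 b, v t0 * G t ≤ u t := by
    intro t ht
    have hsub : Icc t0 t ⊆ Ico c b := fun x hx =>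
      ⟨hct0.le.trans hx.1, lt_of_le_of_lt hx.2 ht.2⟩
    have huIcc : uIcc t0 t = Icc t0 t := uIcc_of_le ht.1
    have h1 : ∫ s in t0..t, deriv u s = u t - u t0 := by
      apply intervalIntegral.integral_eq_sub_of_hasDerivAt
      · intro x hx
        rw [huIcc] at hx
        exact (hu x (hsub hx)).hasDerivAt
      · apply ContinuousOn.intervalIntegrable
        rw [huIcc]
        exact hdu_cont.mono hsub
    have h2 : ∫ s in t0..t, v t0 * (p s)⁻¹ ≤ ∫ s in t0..t, deriv u s := by
      apply intervalIntegral.integral_mono_on ht.1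
      · apply ContinuousOn.intervalIntegrable
        rw [huIcc]
        exact continuousOn_const.mul (hpinv_cont.mono hsub)
      · apply ContinuousOn.intervalIntegrable
        rw [huIcc]
        exact hdu_cont.mono hsub
      · intro s hs
        have hs' : s ∈ Ico c b := hsub hs
        have hvs : v t0 ≤ v s := hvge s ⟨hs.1, hs'.2⟩
        have hps : 0 < p s := hppos s hs'
        have hvs' : v t0 ≤ p s * deriv u s := hvs
        rw [← div_eq_mul_inv, div_le_iff₀ hps]
        linarith
    have h3 : ∫ s in t0..t, v t0 * (p s)⁻¹ = v t0 * G t := by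
      rw [hGdef]
      exact intervalIntegral.integral_const_mul _ _
    have h4 : 1 ≤ u t0 := hu1 t0 ⟨hct0.le, ht0b⟩
    rw [h3, h1] at h2
    linarith
  -- integrability of h = (p u²)⁻¹ near b
  set h : ℝ → ℝ := fun t => (p t * u t ^ 2)⁻¹ with hhdef
  have hh_contOn : ContinuousOn h (Ico c b) := by
    apply ContinuousOn.inv₀
    · exact hp.mul (hu_cont.pow 2)
    · intro t ht
      exact (mul_pos (hppos t ht) (pow_pos (hupos t ht) 2)).ne'
  have hbound : ∀ T ∈ Ico t1 b, ∫ x in Ioc t1 T, ‖h x‖ ≤ (v t0 ^ 2)⁻¹ * a1⁻¹ := by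
    intro T hT
    have hsub : Icc t1 T ⊆ Ico c b := fun x hx => ⟨hct1.le.trans hx.1, lt_of_le_of_lt hx.2 hT.2⟩
    have hsub' : Icc t1 T ⊆ Ioo c b := fun x hx => ⟨hct1.trans_le hx.1, lt_of_le_of_lt hx.2 hT.2⟩
    have hGa : ∀ x ∈ Icc t1 T, a1 ≤ G x := fun x hx => hGge x ⟨hx.1, (hsub hx).2⟩
    have hGpos : ∀ x ∈ Icc t1 T, 0 < G x := fun x hx => lt_of_lt_of_le ha1 (hGa x hx)
    have hG_cont : ContinuousOn G (Icc t1 T) := fun x hx =>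
      (hG_deriv x (hsub' hx)).differentiableAt.continuousAt.continuousWithinAt
    have hw : ∀ x ∈ uIcc t1 T, HasDerivAt (fun y => -(G y)⁻¹) ((p x)⁻¹ / G x ^ 2) x := by
      intro x hx
      rw [uIcc_of_le hT.1] at hx
      have h1 : HasDerivAt (fun y => -(G y)⁻¹) (-(-(p x)⁻¹ / G x ^ 2)) x := ((hG_deriv x (hsub' hx)).inv (hGpos x hx).ne').neg
      convert h1 using 1
      ring
    have hInt : IntervalIntegrable (fun x => (p x)⁻¹ / G x ^ 2) volume t1 T := by
      apply ContinuousOn.intervalIntegrable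
      rw [uIcc_of_le hT.1]
      exact (hpinv_cont.mono hsub).div (hG_cont.pow 2)
        fun x hx => (pow_pos (hGpos x hx) 2).ne'
    have hFTC : ∫ x in t1..T, (p x)⁻¹ / G x ^ 2 = (G t1)⁻¹ - (G T)⁻¹ := by
      rw [intervalIntegral.integral_eq_sub_of_hasDerivAt hw hInt]
      ring
    have hpt : ∀ x ∈ Ioc t1 T, h x ≤ (v t0 ^ 2)⁻¹ * ((p x)⁻¹ / G x ^ 2) := by
      intro x hx
      have hx' : x ∈ Icc t1 T := Ioc_subset_Icc_self hx
      have hpx := hppos x (hsub hx')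
      have hGx := hGpos x hx'
      have hux : v t0 * G x ≤ u x := hu_ge x ⟨ht0t1.le.trans hx'.1, (hsub hx').2⟩
      have hvGle := mul_le_mul hux hux (mul_pos hm hGx).le ((mul_pos hm hGx).le.trans hux)
      have key : v t0 ^ 2 * G x ^ 2 ≤ u x ^ 2 := by nlinarith [hvGle]
      have e : (v t0 ^ 2)⁻¹ * ((p x)⁻¹ / G x ^ 2) = (v t0 ^ 2 * p x * G x ^ 2)⁻¹ := by
        field_simp
      rw [e]
      apply inv_anti₀ (mul_pos (mul_pos (pow_pos hm 2) hpx) (pow_pos hGx 2))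
      nlinarith
    have hh_int : IntegrableOn h (Ioc t1 T) :=
      ((hh_contOn.mono hsub).integrableOn_Icc).mono_set Ioc_subset_Icc_self
    have hmaj_int : IntegrableOn (fun x => (v t0 ^ 2)⁻¹ * ((p x)⁻¹ / G x ^ 2)) (Ioc t1 T) :=
      (hInt.1).const_mul _
    have hGTpos : 0 < G T := hGpos T ⟨hT.1, le_refl T⟩
    calc ∫ x in Ioc t1 T, ‖h x‖ = ∫ x in Ioc t1 T, h x := by
          apply setIntegral_congr_fun measurableSet_Ioc
          intro x hx
          have hx' : x ∈ Icc t1 T := Ioc_subset_Icc_self hx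
          have : (0:ℝ) ≤ h x :=
            (inv_nonneg).2 (mul_pos (hppos x (hsub hx')) (pow_pos (hupos x (hsub hx')) 2)).le
          exact Real.norm_of_nonneg this
      _ ≤ ∫ x in Ioc t1 T, (v t0 ^ 2)⁻¹ * ((p x)⁻¹ / G x ^ 2) :=
          setIntegral_mono_on hh_int hmaj_int measurableSet_Ioc hpt
      _ = (v t0 ^ 2)⁻¹ * ∫ x in t1..T, (p x)⁻¹ / G x ^ 2 := by
          rw [intervalIntegral.integral_of_le hT.1, MeasureTheory.integral_const_mul]
      _ = (v t0 ^ 2)⁻¹ * ((G t1)⁻¹ - (G T)⁻¹) := by rw [hFTC]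
      _ ≤ (v t0 ^ 2)⁻¹ * a1⁻¹ := by
          have h5 : 0 ≤ (G T)⁻¹ := (inv_nonneg).2 hGTpos.le
          have h6 : (G t1)⁻¹ = a1⁻¹ := by rw [ha1def]
          have h7 : 0 ≤ (v t0 ^ 2)⁻¹ := (inv_nonneg).2 (sq_nonneg _)
          rw [h6]
          nlinarith
  have hh_Ioc : IntegrableOn h (Ioc t1 b) := by
    set bn : ℕ → ℝ := fun n => b - (b - t1) / (n + 1) with hbndef
    have hbn_mem : ∀ n : ℕ, bn n ∈ Ico t1 b := by
      intro n
      have hb1 : (b - t1) / ((n:ℝ) + 1) ≤ b - t1 :=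
        div_le_self (by linarith) (le_add_of_nonneg_left (Nat.cast_nonneg n))
      have hb2 : 0 < (b - t1) / ((n:ℝ) + 1) := div_pos (by linarith) (by positivity)
      constructor
      · show t1 ≤ b - (b - t1) / ((n:ℝ) + 1); linarith
      · show b - (b - t1) / ((n:ℝ) + 1) < b; linarith
    have hbn_tend : Filter.Tendsto bn Filter.atTop (nhds b) := by
      have h0 : Filter.Tendsto (fun n : ℕ => (b - t1) / ((n:ℝ) + 1)) Filter.atTop (nhds 0) := by
        have := tendsto_one_div_add_atTop_nhds_zero_nat.const_mul (b - t1)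
        simpa [div_eq_mul_inv, mul_comm] using this
      have := Filter.Tendsto.sub (tendsto_const_nhds (x := b)) h0
      simpa using this
    have hfi : ∀ n : ℕ, IntegrableOn h (Ioc t1 (bn n)) := by
      intro n
      have hsubn : Icc t1 (bn n) ⊆ Ico c b := fun x hx =>
        ⟨hct1.le.trans hx.1, lt_of_le_of_lt hx.2 (hbn_mem n).2⟩
      exact ((hh_contOn.mono hsubn).integrableOn_Icc).mono_set Ioc_subset_Icc_self
    exact integrableOn_Ioc_of_intervalIntegral_norm_bounded_right hfi hbn_tend
      (Filter.Eventually.of_forall fun n => hbound (bn n) (hbn_mem n))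
  -- final assembly
  have hf_cont : ContinuousOn (fun t => (b - t) / Real.sqrt (p t)) (Ico c b) := by
    apply ContinuousOn.div
    · exact (continuous_const.sub continuous_id).continuousOn
    · exact Real.continuous_sqrt.comp_continuousOn hp
    · intro t ht
      exact (Real.sqrt_pos.2 (hppos t ht)).ne'
  have hpart1 : IntegrableOn (fun t => (b - t) / Real.sqrt (p t)) (Ioc c t1) := by
    have hsub : Icc c t1 ⊆ Ico c b := fun x hx => ⟨hx.1, lt_of_le_of_lt hx.2 ht1b⟩
    exact ((hf_cont.mono hsub).integrableOn_Icc).mono_set Ioc_subset_Icc_self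
  have hsub2 : Ioo t1 b ⊆ Ico c b := fun x hx => ⟨hct1.le.trans hx.1.le, hx.2⟩
  have hpart2 : IntegrableOn (fun t => (b - t) / Real.sqrt (p t)) (Ioo t1 b) := by
    set M : ℝ → ℝ := fun t => (b - c) ^ 2 * u t ^ 2 + h t with hMdef
    have hM_int : IntegrableOn M (Ioo t1 b) := by
      apply Integrable.add
      · exact (hint.mono_set (Ioo_subset_Ioo_left hct1.le)).const_mul _
      · exact hh_Ioc.mono_set Ioo_subset_Ioc_self
    apply hM_int.mono'
    · exact (hf_cont.mono hsub2).aestronglyMeasurable measurableSet_Ioo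
    · rw [ae_restrict_iff' measurableSet_Ioo]
      apply ae_of_all
      intro t ht
      have ht' : t ∈ Ico c b := hsub2 ht
      have hpt := hppos t ht'
      have hut := hupos t ht'
      have hst : 0 < Real.sqrt (p t) := Real.sqrt_pos.2 hpt
      have hbt : 0 ≤ b - t := by linarith [ht.2]
      rw [Real.norm_of_nonneg (div_nonneg hbt hst.le)]
      set A := (b - t) * u t with hA
      set B := (Real.sqrt (p t) * u t)⁻¹ with hB
      have hAB : (b - t) / Real.sqrt (p t) = A * B := by
        rw [hA, hB]
        field_simp
      have hB2 : B ^ 2 = (p t * u t ^ 2)⁻¹ := by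
        rw [hB, inv_pow, mul_pow, Real.sq_sqrt hpt.le]
      have hA2 : A ^ 2 ≤ (b - c) ^ 2 * u t ^ 2 := by
        have h1 : b - t ≤ b - c := by linarith [ht'.1]
        rw [hA, mul_pow]
        exact mul_le_mul_of_nonneg_right (pow_le_pow_left₀ hbt h1 2) (sq_nonneg _)
      have hABnn : 0 ≤ A * B :=
        mul_nonneg (mul_nonneg hbt hut.le) (inv_nonneg.2 (mul_nonneg hst.le hut.le))
      have hfin : A * B ≤ (b - c) ^ 2 * u t ^ 2 + (p t * u t ^ 2)⁻¹ := by
        linarith [two_mul_le_add_sq A B, hABnn, hA2, hB2.le, hB2.ge]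
      rw [hAB]
      exact hfin
  have hunion : Ioc c t1 ∪ Ioo t1 b = Ioo c b := Ioc_union_Ioo_eq_Ioo hct1.le ht1b
  rw [← hunion]
  exact hpart1.union hpart2
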